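/- Let m ≥ 2 and let γ be a real number with ‖mγ‖ ≠ 0. Then there exist constants C > 0 and η > 0 such that for every real number β and every integer k ≥ 2, |(1/q_k) ∑_{0≤u<q_k} e(γ S_α(u) + β u)| ≤ C · e^{−kη}. -/

import Mathlib

noncomputable section

/-- `e x = exp(2 π i x)`. -/
def e (x : ℝ) : ℂ := Complex.exp (2 * Real.pi * Complex.I * x)

/-- `‖x‖`: the distance from `x` to the nearest integer. -/
def intDist (x : ℝ) : ℝ := |x - round x|

/-- Denominators of the convergents of `α = [0; 1, m, 1, m, …]`:
`q_0 = q_1 = 1`, `q_n = m·q_{n-1} + q_{n-2}` for even `n ≥ 2`, and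
`q_n = q_{n-1} + q_{n-2}` for odd `n ≥ 3`. -/
def qseq (m : ℕ) : ℕ → ℕ
  | 0 => 1
  | 1 => 1
  | n + 2 => (if n % 2 = 0 then m else 1) * qseq m (n + 1) + qseq m n

/-- `b` assigns to each natural number `n` its (unique) Ostrowski `α`-digit
sequence for `α = [0; 1, m, 1, m, …]`: `n = ∑ i, b n i · q_i`, `b n 0 = 0`,
even-indexed digits are `≤ 1`, odd-indexed digits are `≤ m`, and if a digit
(of positive index) attains its maximal allowed value then the previous digit
vanishes. -/
def IsOstrowskiDigits (m : ℕ) (b : ℕ → ℕ →₀ ℕ) : Prop :=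
  (∀ n : ℕ, ((b n).sum fun i c => c * qseq m i) = n) ∧
  (∀ n : ℕ, b n 0 = 0) ∧
  (∀ n i : ℕ, i % 2 = 0 → b n i ≤ 1) ∧
  (∀ n i : ℕ, i % 2 = 1 → b n i ≤ m) ∧
  (∀ n i : ℕ, 1 ≤ i → b n i = (if i % 2 = 0 then 1 else m) → b n (i - 1) = 0)

/-- Ostrowski sum of digits `S_α(n)`. -/
def Sα (b : ℕ → ℕ →₀ ℕ) (n : ℕ) : ℕ := (b n).sum fun _ c => c

namespace MLaux

/-- maximal digit at index `i` (also the recurrence coefficient). -/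
def mx (m i : ℕ) : ℕ := if i % 2 = 0 then 1 else m

lemma mx_pos {m : ℕ} (hm : 1 ≤ m) (i : ℕ) : 1 ≤ mx m i := by
  unfold mx; split <;> omega

lemma mx_le {m : ℕ} (hm : 1 ≤ m) (i : ℕ) : mx m i ≤ m := by
  unfold mx; split <;> omega

lemma qseq_rec (m k : ℕ) (hk : 1 ≤ k) :
    qseq m (k + 1) = mx m k * qseq m k + qseq m (k - 1) := by
  obtain ⟨j, rfl⟩ : ∃ j, k = j + 1 := ⟨k - 1, by omega⟩
  show qseq m (j + 2) = _
  rw [qseq]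
  have : (if j % 2 = 0 then m else 1) = mx m (j+1) := by
    unfold mx; rcases Nat.even_or_odd j with h | h
    · simp [Nat.even_iff.mp h, Nat.succ_mod_two_eq_zero_iff, Nat.succ_mod_two_eq_one_iff]
    · simp [Nat.odd_iff.mp h, Nat.succ_mod_two_eq_zero_iff]
  simp [this]

lemma qseq_pos (m : ℕ) (hm : 1 ≤ m) : ∀ k, 1 ≤ qseq m k := by
  intro k
  induction k using Nat.strong_induction_on with
  | _ k ih =>
    match k with
    | 0 => exact le_refl 1
    | 1 => exact le_refl 1
    | (j+2) =>
      rw [qseq]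
      have h1 := ih (j+1) (by omega)
      have h2 := ih j (by omega)
      have : 1 ≤ (if j % 2 = 0 then m else 1) := by split <;> omega
      nlinarith

lemma qseq_mono (m : ℕ) (hm : 1 ≤ m) : Monotone (qseq m) := by
  apply monotone_nat_of_le_succ
  intro k
  match k with
  | 0 => simp [qseq]
  | (j+1) =>
    rw [qseq_rec m (j+1) (by omega)]
    have h1 := qseq_pos m hm (j+1-1)
    have h2 := mx_pos hm (j+1)
    nlinarith [qseq_pos m hm (j+1)]

/-- window identity -/
lemma qseq_window (m k : ℕ) (hk : k % 2 = 1) :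
    qseq m (k + 4) + qseq m k = (m + 2) * qseq m (k + 2) := by
  have h1 : qseq m (k+2) = mx m (k+1) * qseq m (k+1) + qseq m k := by
    have := qseq_rec m (k+1) (by omega); simpa using this
  have h2 : qseq m (k+3) = mx m (k+2) * qseq m (k+2) + qseq m (k+1) := by
    have := qseq_rec m (k+2) (by omega); simpa using this
  have h3 : qseq m (k+4) = mx m (k+3) * qseq m (k+3) + qseq m (k+2) := by
    have := qseq_rec m (k+3) (by omega); simpa using this
  have e1 : mx m (k+1) = 1 := by unfold mx; simp [Nat.add_mod, hk]
  have e2 : mx m (k+2) = m := by unfold mx; simp [Nat.add_mod, hk]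
  have e3 : mx m (k+3) = 1 := by unfold mx; simp [Nat.add_mod, hk]
  rw [e1] at h1; rw [e2] at h2; rw [e3] at h3
  have expand : (m + 2) * qseq m (k + 2) = m * qseq m (k + 2) + 2 * qseq m (k + 2) := by ring
  rw [expand]
  linarith



-- appended inside namespace MLaux
def Valid (m : ℕ) (v : ℕ →₀ ℕ) : Prop :=
  v 0 = 0 ∧ (∀ i, i % 2 = 0 → v i ≤ 1) ∧ (∀ i, i % 2 = 1 → v i ≤ m) ∧
  ∀ i, 1 ≤ i → v i = mx m i → v (i - 1) = 0

def wt (m : ℕ) (v : ℕ →₀ ℕ) : ℕ := v.sum fun i c => c * qseq m i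

lemma wt_add (m : ℕ) (v w : ℕ →₀ ℕ) : wt m (v + w) = wt m v + wt m w := by
  unfold wt
  apply Finsupp.sum_add_index' <;> intros <;> ring

lemma wt_single (m k c : ℕ) : wt m (Finsupp.single k c) = c * qseq m k := by
  unfold wt
  exact Finsupp.sum_single_index (by ring)

lemma wt_erase (m k : ℕ) (v : ℕ →₀ ℕ) :
    wt m v = v k * qseq m k + wt m (v.erase k) := by
  conv_lhs => rw [← Finsupp.single_add_erase k v]
  rw [wt_add, wt_single]

lemma valid_erase {m : ℕ} {v : ℕ →₀ ℕ} (hm : 1 ≤ m) (hv : Valid m v) (k : ℕ) :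
    Valid m (v.erase k) := by
  obtain ⟨h0, he, ho, hmax⟩ := hv
  refine ⟨?_, ?_, ?_, ?_⟩
  · by_cases h : k = 0
    · subst h; exact Finsupp.erase_same
    · rw [Finsupp.erase_ne (by omega : (0:ℕ) ≠ k)]; exact h0
  · intro i hi
    by_cases h : i = k
    · subst h; simp [Finsupp.erase_same]
    · rw [Finsupp.erase_ne h]; exact he i hi
  · intro i hi
    by_cases h : i = k
    · subst h; rw [Finsupp.erase_same]; exact Nat.zero_le _
    · rw [Finsupp.erase_ne h]; exact ho i hi
  · intro i hi hieq
    by_cases h : i = k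
    · subst h; rw [Finsupp.erase_same] at hieq
      exact absurd hieq.symm (by have := mx_pos hm i; omega)
    · rw [Finsupp.erase_ne h] at hieq
      by_cases h2 : i - 1 = k
      · rw [h2, Finsupp.erase_same]
      · rw [Finsupp.erase_ne h2]; exact hmax i hi hieq

lemma valid_digit_le {m : ℕ} {v : ℕ →₀ ℕ} (hv : Valid m v) (i : ℕ) : v i ≤ mx m i := by
  rcases Nat.even_or_odd i with h | h
  · have := hv.2.1 i (Nat.even_iff.mp h); unfold mx; rw [if_pos (Nat.even_iff.mp h)]; exact this
  · have h2 := Nat.odd_iff.mp h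
    have := hv.2.2.1 i h2; unfold mx
    rw [if_neg (by omega : ¬ i % 2 = 0)]; exact this

lemma wt_lt {m : ℕ} (hm : 1 ≤ m) :
    ∀ k (v : ℕ →₀ ℕ), Valid m v → (∀ i, k ≤ i → v i = 0) → wt m v < qseq m k := by
  intro k
  induction k using Nat.strong_induction_on with
  | _ k ih =>
    intro v hv hsupp
    match k with
    | 0 =>
      have : v = 0 := by ext i; exact hsupp i (Nat.zero_le i)
      simp [this, wt, qseq]
    | 1 =>
      have : v = 0 := by
        ext i
        rcases Nat.eq_zero_or_pos i with h | h
        · rw [h]; exact hv.1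
        · exact hsupp i h
      simp [this, wt, qseq]
    | (j+2) =>
      set c := v (j+1) with hc
      have hrec : qseq m (j+2) = mx m (j+1) * qseq m (j+1) + qseq m j := by
        simpa using qseq_rec m (j+1) (by omega)
      have hdec := wt_erase m (j+1) v
      have hvev := valid_erase hm hv (j+1)
      by_cases hcmax : c = mx m (j+1)
      · -- maximal top digit: v j = 0
        have hj0 : v j = 0 := by
          have := hv.2.2.2 (j+1) (by omega) (by unfold mx at hcmax ⊢; omega)
          simpa using this
        have hsupp' : ∀ i, j ≤ i → (v.erase (j+1)) i = 0 := by
          intro i hi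
          by_cases h : i = j+1
          · subst h; exact Finsupp.erase_same
          · rw [Finsupp.erase_ne h]
            rcases Nat.lt_or_ge i (j+1) with h2 | h2
            · have : i = j := by omega
              rw [this]; exact hj0
            · exact hsupp i (by omega)
        have := ih j (by omega) _ hvev hsupp'
        rw [hdec, ← hc, hcmax]
        omega
      · -- c < mx
        have hclt : c < mx m (j+1) := lt_of_le_of_ne (valid_digit_le hv (j+1)) hcmax
        have hsupp' : ∀ i, j+1 ≤ i → (v.erase (j+1)) i = 0 := by
          intro i hi
          by_cases h : i = j+1
          · subst h; exact Finsupp.erase_same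
          · rw [Finsupp.erase_ne h]; exact hsupp i (by omega)
        have h2 := ih (j+1) (by omega) _ hvev hsupp'
        rw [hdec, ← hc]
        have : c * qseq m (j+1) + qseq m (j+1) ≤ mx m (j+1) * qseq m (j+1) := by
          have : (c+1) * qseq m (j+1) ≤ mx m (j+1) * qseq m (j+1) :=
            Nat.mul_le_mul_right _ (by omega)
          linarith [this]
        have hq := qseq_pos m hm j
        omega

lemma wt_eq_unique {m : ℕ} (hm : 1 ≤ m) :
    ∀ k (v w : ℕ →₀ ℕ), Valid m v → Valid m w →
      (∀ i, k ≤ i → v i = 0) → (∀ i, k ≤ i → w i = 0) → wt m v = wt m w → v = w := by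
  intro k
  induction k with
  | zero =>
    intro v w _ _ hv hw _
    ext i; rw [hv i (Nat.zero_le i), hw i (Nat.zero_le i)]
  | succ k ih =>
    intro v w hv hw hvs hws hwt
    have keydig : ∀ (v w : ℕ →₀ ℕ), Valid m v → Valid m w →
        (∀ i, k+1 ≤ i → v i = 0) → (∀ i, k+1 ≤ i → w i = 0) → wt m v = wt m w →
        ¬ (v k < w k) := by
      intro v w hv hw hvs hws hwt hlt
      have h1 : wt m w ≥ w k * qseq m k := by
        rw [wt_erase m k w]; omega
      have h2 : wt m v < (v k + 1) * qseq m k := by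
        rw [wt_erase m k v]
        have hlt2 : wt m (v.erase k) < qseq m k := by
          apply wt_lt hm k _ (valid_erase hm hv k)
          intro i hi
          by_cases h : i = k
          · subst h; exact Finsupp.erase_same
          · rw [Finsupp.erase_ne h]; exact hvs i (by omega)
        nlinarith
      have : (v k + 1) * qseq m k ≤ w k * qseq m k := Nat.mul_le_mul_right _ (by omega)
      omega
    have hdk : v k = w k := by
      rcases Nat.lt_trichotomy (v k) (w k) with h | h | h
      · exact absurd h (keydig v w hv hw hvs hws hwt)
      · exact h
      · exact absurd h (keydig w v hw hv hws hvs hwt.symm)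
    have herase : v.erase k = w.erase k := by
      apply ih _ _ (valid_erase hm hv k) (valid_erase hm hw k)
      · intro i hi
        by_cases h : i = k
        · subst h; exact Finsupp.erase_same
        · rw [Finsupp.erase_ne h]; exact hvs i (by omega)
      · intro i hi
        by_cases h : i = k
        · subst h; exact Finsupp.erase_same
        · rw [Finsupp.erase_ne h]; exact hws i (by omega)
      · have e1 := wt_erase m k v
        have e2 := wt_erase m k w
        have e3 : v k * qseq m k = w k * qseq m k := by rw [hdk]
        omega
    ext i
    by_cases h : i = k
    · rw [h]; exact hdk
    · have := congrFun (congrArg (↑· : (ℕ →₀ ℕ) → ℕ → ℕ) herase) i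
      simpa [Finsupp.erase_ne h] using this

lemma hb_valid {m : ℕ} {b : ℕ → ℕ →₀ ℕ} (hb : IsOstrowskiDigits m b) (n : ℕ) :
    Valid m (b n) := by
  obtain ⟨h1, h2, h3, h4, h5⟩ := hb
  exact ⟨h2 n, h3 n, h4 n, fun i hi he => h5 n i hi (by unfold mx at he; exact he)⟩

lemma hb_wt {m : ℕ} {b : ℕ → ℕ →₀ ℕ} (hb : IsOstrowskiDigits m b) (n : ℕ) :
    wt m (b n) = n := hb.1 n

lemma term_le_wt (m : ℕ) (v : ℕ →₀ ℕ) (i : ℕ) : v i * qseq m i ≤ wt m v := by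
  by_cases h : v i = 0
  · simp [h]
  · unfold wt Finsupp.sum
    exact Finset.single_le_sum (f := fun j => v j * qseq m j)
      (fun j _ => Nat.zero_le _) (Finsupp.mem_support_iff.mpr h)

lemma digits_zero_of_lt {m : ℕ} (hm : 1 ≤ m) {b : ℕ → ℕ →₀ ℕ}
    (hb : IsOstrowskiDigits m b) {n k : ℕ} (h : n < qseq m k) :
    ∀ i, k ≤ i → b n i = 0 := by
  intro i hi
  by_contra hne
  have h1 : qseq m i ≤ b n i * qseq m i := Nat.le_mul_of_pos_left _ (by omega)
  have h2 := term_le_wt m (b n) i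
  have h3 := qseq_mono m hm hi
  rw [hb_wt hb] at h2
  omega

lemma S_add {m : ℕ} (hm : 1 ≤ m) {b : ℕ → ℕ →₀ ℕ} (hb : IsOstrowskiDigits m b)
    {k : ℕ} (hk : 1 ≤ k) {c u : ℕ} (hc : c ≤ mx m k)
    (hcm : c = mx m k → u < qseq m (k - 1)) (hu : u < qseq m k) :
    Sα b (c * qseq m k + u) = c + Sα b u := by
  set w : ℕ →₀ ℕ := Finsupp.single k c + b u with hw
  have hbu0 : ∀ i, k ≤ i → b u i = 0 := digits_zero_of_lt hm hb hu
  have hwk : ∀ i, i ≠ k → w i = b u i := by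
    intro i hi
    rw [hw]; simp [Finsupp.single_apply, if_neg (Ne.symm hi)]
  have hwkk : w k = c := by
    rw [hw]; simp [Finsupp.single_apply, hbu0 k le_rfl]
  have hvu := hb_valid hb u
  have hwvalid : Valid m w := by
    refine ⟨?_, ?_, ?_, ?_⟩
    · rw [hwk 0 (by omega)]; exact hvu.1
    · intro i hi
      by_cases h : i = k
      · subst h; rw [hwkk]
        have : mx m i = 1 := by unfold mx; rw [if_pos hi]
        omega
      · rw [hwk i h]; exact hvu.2.1 i hi
    · intro i hi
      by_cases h : i = k
      · subst h; rw [hwkk]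
        have : mx m i = m := by unfold mx; rw [if_neg (by omega)]
        omega
      · rw [hwk i h]; exact hvu.2.2.1 i hi
    · intro i hi hieq
      by_cases h : i = k
      · subst h
        rw [hwkk] at hieq
        have hu' := hcm hieq
        have : b u (i-1) = 0 := by
          rcases Nat.eq_zero_or_pos (i-1) with h0 | h0
          · rw [h0]; exact hvu.1
          · exact digits_zero_of_lt hm hb hu' (i-1) le_rfl
        rw [hwk (i-1) (by omega), this]
      · by_cases h2 : i = k + 1
        · exfalso
          rw [hwk i h, h2, hbu0 (k+1) (by omega)] at hieq
          have := mx_pos hm (k+1)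
          omega
        · rw [hwk i h] at hieq
          rw [hwk (i-1) (by omega), hvu.2.2.2 i hi hieq]
  have hwwt : wt m w = c * qseq m k + u := by
    rw [hw, wt_add, wt_single, hb_wt hb]
  have hlt : c * qseq m k + u < qseq m (k + 1) := by
    rw [qseq_rec m k hk]
    by_cases h : c = mx m k
    · have := hcm h; subst h; omega
    · have hc1 : c + 1 ≤ mx m k := by omega
      have : (c+1) * qseq m k ≤ mx m k * qseq m k := Nat.mul_le_mul_right _ hc1
      have hq := qseq_pos m hm (k-1)
      nlinarith
  have heq : b (c * qseq m k + u) = w := by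
    apply wt_eq_unique hm (k+1) _ _ (hb_valid hb _) hwvalid
    · exact digits_zero_of_lt hm hb hlt
    · intro i hi
      rw [hwk i (by omega), hbu0 i (by omega)]
    · rw [hwwt, hb_wt hb]
  unfold Sα
  rw [heq, hw]
  rw [Finsupp.sum_add_index' (fun _ => rfl) (fun _ _ _ => rfl)]
  rw [Finsupp.sum_single_index rfl]


open Real in
lemma e_add (x y : ℝ) : e (x + y) = e x * e y := by
  unfold e; rw [← Complex.exp_add]; congr 1; push_cast; ring

lemma abs_e (x : ℝ) : ‖e x‖ = 1 := by
  unfold e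
  rw [show (2 * ↑Real.pi * Complex.I * (x:ℂ)) = ((2 * Real.pi * x : ℝ) : ℂ) * Complex.I by
    push_cast; ring]
  exact Complex.norm_exp_ofReal_mul_I _

lemma e_zero : e 0 = 1 := by unfold e; simp

lemma intDist_nonneg (x : ℝ) : 0 ≤ intDist x := abs_nonneg _

lemma intDist_le_half (x : ℝ) : intDist x ≤ 1 / 2 := abs_sub_round x

lemma intDist_le_abs_sub (x : ℝ) (n : ℤ) : intDist x ≤ |x - n| := by
  by_cases h : n = round x
  · subst h; exact le_refl _
  · have h1 : (1 : ℝ) ≤ |(round x : ℝ) - (n : ℝ)| := by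
      have : (1 : ℤ) ≤ |round x - n| := Int.one_le_abs (sub_ne_zero.mpr (Ne.symm h))
      calc (1:ℝ) = ((1:ℤ):ℝ) := by norm_num
      _ ≤ ((|round x - n| : ℤ) : ℝ) := by exact_mod_cast this
      _ = |(round x : ℝ) - n| := by push_cast; ring_nf
    have tri : |(round x : ℝ) - n| ≤ |x - n| + |x - round x| := by
      have : (round x : ℝ) - n = (x - n) - (x - round x) := by ring
      rw [this]
      exact abs_sub _ _
    have hh := abs_sub_round x
    unfold intDist
    linarith

lemma intDist_add_le (x y : ℝ) : intDist (x + y) ≤ intDist x + intDist y := by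
  calc intDist (x + y) ≤ |x + y - ((round x + round y : ℤ) : ℝ)| := intDist_le_abs_sub _ _
  _ = |(x - round x) + (y - round y)| := by push_cast; ring_nf
  _ ≤ |x - round x| + |y - round y| := abs_add_le _ _
  _ = intDist x + intDist y := rfl

lemma intDist_neg (x : ℝ) : intDist (-x) = intDist x := by
  have h1 : intDist (-x) ≤ intDist x := by
    calc intDist (-x) ≤ |(-x) - ((-(round x) : ℤ) : ℝ)| := intDist_le_abs_sub _ _
    _ = |x - round x| := by push_cast; rw [show -x - (-(round x:ℝ)) = -(x - round x) by ring, abs_neg]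
    _ = intDist x := rfl
  have h2 : intDist x ≤ intDist (-x) := by
    calc intDist x ≤ |x - ((-(round (-x)) : ℤ) : ℝ)| := intDist_le_abs_sub _ _
    _ = |(-x) - round (-x)| := by push_cast; rw [show x - (-(round (-x):ℝ)) = -((-x) - round (-x)) by ring, abs_neg]
    _ = intDist (-x) := rfl
  linarith

lemma intDist_sub_le (x y : ℝ) : intDist (x - y) ≤ intDist x + intDist y := by
  rw [sub_eq_add_neg]
  calc intDist (x + -y) ≤ intDist x + intDist (-y) := intDist_add_le _ _
  _ = intDist x + intDist y := by rw [intDist_neg]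

lemma intDist_nsmul_le (n : ℕ) (x : ℝ) : intDist ((n : ℝ) * x) ≤ n * intDist x := by
  induction n with
  | zero => simp [intDist]
  | succ k ih =>
    have : ((k+1 : ℕ) : ℝ) * x = (k : ℝ) * x + x := by push_cast; ring
    rw [this]
    calc intDist ((k:ℝ)*x + x) ≤ intDist ((k:ℝ)*x) + intDist x := intDist_add_le _ _
    _ ≤ (k:ℝ) * intDist x + intDist x := by linarith
    _ = ((k+1:ℕ):ℝ) * intDist x := by push_cast; ring

open Real in
lemma cos_pi_mul_le {t : ℝ} (h0 : 0 ≤ t) (h1 : t ≤ 1/2) :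
    Real.cos (π * t) ≤ 1 - 2 * t ^ 2 := by
  have hpi := Real.pi_pos
  have hid : Real.cos (π * t) = 1 - 2 * Real.sin (π * t / 2) ^ 2 := by
    have h2 := Real.cos_two_mul' (π * t / 2)
    rw [show 2 * (π * t / 2) = π * t by ring] at h2
    rw [h2, Real.cos_sq']; ring
  rw [hid]
  have hs : t ≤ Real.sin (π * t / 2) := by
    have hle := Real.mul_le_sin (x := π * t / 2) (by nlinarith) (by nlinarith)
    have : 2 / π * (π * t / 2) = t := by field_simp
    linarith [hle, this.symm.le]
  nlinarith

open Real in
lemma abs_cos_pi_le (θ : ℝ) : |Real.cos (π * θ)| ≤ 1 - 2 * intDist θ ^ 2 := by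
  have hpi := Real.pi_pos
  set n := round θ with hn
  set s := θ - (n : ℝ) with hs
  have hd : intDist θ = |s| := rfl
  have habs : |s| ≤ 1/2 := abs_sub_round θ
  have h1 : Real.cos (π * θ) = Real.cos ((n:ℝ) * π + π * s) := by
    congr 1; rw [hs]; ring
  have h2 : |Real.cos (π * θ)| ≤ |Real.cos (π * s)| := by
    rw [h1, Real.cos_add, Real.sin_int_mul_pi]
    rw [show Real.cos ((n:ℝ)*π) * Real.cos (π*s) - 0 * Real.sin (π*s)
        = Real.cos ((n:ℝ)*π) * Real.cos (π*s) by ring]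
    rw [abs_mul]
    have : |Real.cos ((n:ℝ)*π)| ≤ 1 := Real.abs_cos_le_one _
    nlinarith [abs_nonneg (Real.cos (π*s))]
  have h3 : |Real.cos (π * s)| = Real.cos (π * |s|) := by
    have : Real.cos (π * s) = Real.cos (π * |s|) := by
      rcases abs_cases s with ⟨h, _⟩ | ⟨h, _⟩
      · rw [h]
      · rw [h, show π * -s = -(π * s) by ring, Real.cos_neg]
    rw [this]
    exact abs_of_nonneg (Real.cos_nonneg_of_mem_Icc
      ⟨by nlinarith [abs_nonneg s], by nlinarith [habs]⟩)
  have h4 : Real.cos (π * |s|) ≤ 1 - 2 * |s| ^ 2 :=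
    cos_pi_mul_le (abs_nonneg s) habs
  rw [hd]
  linarith [h2, h3 ▸ h4]

open Real in
lemma abs_one_add_e (θ : ℝ) : ‖1 + e θ‖ ≤ 2 - 4 * intDist θ ^ 2 := by
  have key : ∀ a : ℝ, Complex.exp ((a:ℂ) * Complex.I) + Complex.exp ((↑(-a):ℂ) * Complex.I)
      = 2 * (Real.cos a : ℂ) := by
    intro a
    rw [Complex.exp_mul_I, Complex.exp_mul_I]
    push_cast
    rw [Complex.cos_neg, Complex.sin_neg, ← Complex.ofReal_cos]
    ring
  have hfact : (1 : ℂ) + e θ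
      = Complex.exp ((↑(π*θ):ℂ) * Complex.I) *
        (Complex.exp ((↑(π*θ):ℂ) * Complex.I) + Complex.exp ((↑(-(π*θ)):ℂ) * Complex.I)) := by
    rw [mul_add, ← Complex.exp_add, ← Complex.exp_add]
    unfold e
    rw [show (↑(π*θ):ℂ) * Complex.I + (↑(-(π*θ)):ℂ) * Complex.I = 0 by push_cast; ring,
        Complex.exp_zero]
    rw [show (↑(π*θ):ℂ) * Complex.I + (↑(π*θ):ℂ) * Complex.I = 2*↑π*Complex.I*↑θ by push_cast; ring]
    ring
  rw [hfact, norm_mul, Complex.norm_exp_ofReal_mul_I, one_mul, key (π*θ)]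
  rw [norm_mul]
  have : ‖(Real.cos (π*θ) : ℂ)‖ = |Real.cos (π*θ)| := (Complex.norm_real _).trans (Real.norm_eq_abs _)
  rw [this]
  have h2 : ‖(2 : ℂ)‖ = 2 := by norm_num
  rw [h2]
  have := abs_cos_pi_le θ
  nlinarith [intDist_nonneg θ, sq_nonneg (intDist θ)]

lemma abs_geom_sum_le {mm : ℕ} (hmm : 2 ≤ mm) (θ : ℝ) :
    ‖∑ c ∈ Finset.range mm, e ((c : ℝ) * θ)‖ ≤ (mm : ℝ) - 4 * intDist θ ^ 2 := by
  have hsplit : mm = 2 + (mm - 2) := by omega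
  rw [hsplit, Finset.sum_range_add]
  have h01 : ∑ c ∈ Finset.range 2, e ((c:ℝ) * θ) = 1 + e θ := by
    rw [Finset.sum_range_succ, Finset.sum_range_one]
    norm_num [e_zero]
  rw [h01]
  calc ‖(1 + e θ) + ∑ c ∈ Finset.range (mm-2), e ((↑(2+c):ℝ) * θ)‖
      ≤ ‖1 + e θ‖ + ‖∑ c ∈ Finset.range (mm-2), e ((↑(2+c):ℝ) * θ)‖ :=
        norm_add_le _ _
  _ ≤ (2 - 4 * intDist θ ^ 2) + (mm - 2 : ℕ) := by
      have h2 := abs_one_add_e θ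
      have h3 : ‖∑ c ∈ Finset.range (mm-2), e ((↑(2+c):ℝ) * θ)‖ ≤ ((mm - 2 : ℕ) : ℝ) := by
        calc ‖∑ c ∈ Finset.range (mm-2), e ((↑(2+c):ℝ) * θ)‖
            ≤ ∑ c ∈ Finset.range (mm-2), ‖e ((↑(2+c):ℝ) * θ)‖ :=
              norm_sum_le _ _
        _ = ((mm-2 : ℕ) : ℝ) := by simp [abs_e]
      linarith
  _ ≤ (↑(2 + (mm-2)) : ℝ) - 4 * intDist θ ^ 2 := by push_cast; ring_nf; norm_num


lemma sum_range_mul (f : ℕ → ℂ) (a q : ℕ) :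
    ∑ u ∈ Finset.range (a * q), f u
      = ∑ c ∈ Finset.range a, ∑ u ∈ Finset.range q, f (c * q + u) := by
  induction a with
  | zero => simp
  | succ a ih =>
    rw [show (a+1)*q = a*q + q by ring, Finset.sum_range_add, ih, Finset.sum_range_succ]

lemma G_rec {m : ℕ} (hm : 1 ≤ m) {b : ℕ → ℕ →₀ ℕ} (hb : IsOstrowskiDigits m b)
    (γ β : ℝ) {k : ℕ} (hk : 1 ≤ k) :
    ∑ u ∈ Finset.range (qseq m (k+1)), e (γ * Sα b u + β * u)
      = (∑ c ∈ Finset.range (mx m k), e ((c:ℝ) * (γ + β * qseq m k))) *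
          (∑ u ∈ Finset.range (qseq m k), e (γ * Sα b u + β * u))
        + e ((mx m k : ℝ) * (γ + β * qseq m k)) *
          (∑ u ∈ Finset.range (qseq m (k-1)), e (γ * Sα b u + β * u)) := by
  have hq := qseq_rec m k hk
  have key : ∀ (c u : ℕ), c ≤ mx m k → (c = mx m k → u < qseq m (k-1)) → u < qseq m k →
      e (γ * Sα b (c * qseq m k + u) + β * ((c * qseq m k + u : ℕ) : ℝ))
        = e ((c:ℝ) * (γ + β * qseq m k)) * e (γ * Sα b u + β * u) := by
    intro c u hc hcm hu
    rw [← e_add]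
    congr 1
    rw [S_add hm hb hk hc hcm hu]
    push_cast
    ring
  rw [hq, Finset.sum_range_add, sum_range_mul, Finset.sum_mul]
  congr 1
  · apply Finset.sum_congr rfl
    intro c hc
    rw [Finset.mem_range] at hc
    rw [Finset.mul_sum]
    apply Finset.sum_congr rfl
    intro u hu
    rw [Finset.mem_range] at hu
    exact key c u (le_of_lt hc) (fun h => absurd h (by omega)) hu
  · rw [Finset.mul_sum]
    apply Finset.sum_congr rfl
    intro u hu
    rw [Finset.mem_range] at hu
    exact key (mx m k) u le_rfl (fun _ => hu) (lt_of_lt_of_le hu (qseq_mono m hm (by omega)))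

end MLaux

set_option maxHeartbeats 1000000 in
open MLaux in
/-- Exponential decay of `(1/q_k) ∑_{u < q_k} e(γ S_α(u) + β u)` when
`‖mγ‖ ≠ 0`. -/
theorem matrix_lemma (m : ℕ) (hm : 2 ≤ m)
    (b : ℕ → ℕ →₀ ℕ) (hb : IsOstrowskiDigits m b)
    (γ : ℝ) (hγ : intDist (m * γ) ≠ 0) :
    ∃ C > (0 : ℝ), ∃ η > (0 : ℝ), ∀ β : ℝ, ∀ k : ℕ, 2 ≤ k →
      ‖(1 / (qseq m k : ℂ)) *
          ∑ u ∈ Finset.range (qseq m k), e (γ * Sα b u + β * u)‖ ≤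
        C * Real.exp (-(k * η)) := by
  have hm1 : (1:ℕ) ≤ m := by omega
  have hmR : (2:ℝ) ≤ (m:ℝ) := by exact_mod_cast hm
  set δ : ℝ := intDist (m * γ) / (m + 4) with hδdef
  have hdpos : 0 < intDist ((m:ℝ) * γ) :=
    lt_of_le_of_ne (intDist_nonneg _) (Ne.symm hγ)
  have hδpos : 0 < δ := by apply div_pos hdpos; positivity
  have hδhalf : δ ≤ 1/2 := by
    rw [hδdef, div_le_iff₀ (by positivity)]
    have := intDist_le_half ((m:ℝ) * γ)
    linarith
  set ε : ℝ := 4 * δ^2 with hεdef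
  have hεpos : 0 < ε := by positivity
  have hεle : ε ≤ 1 := by nlinarith
  set K : ℝ := 2 * ((m:ℝ) + 1) with hKdef
  have hKpos : 0 < K := by positivity
  set ρ : ℝ := 1 - ε / K with hρdef
  have hρpos : 0 < ρ := by
    have hεK : ε / K < 1 := by rw [div_lt_one hKpos]; nlinarith
    rw [hρdef]; linarith
  have hρlt : ρ < 1 := by
    have : 0 < ε / K := div_pos hεpos hKpos
    rw [hρdef]; linarith
  have hlogneg : Real.log ρ < 0 := Real.log_neg hρpos hρlt
  refine ⟨Real.exp (-Real.log ρ), Real.exp_pos _, -Real.log ρ / 6, by linarith, ?_⟩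
  intro β k hk
  set g : ℕ → ℝ := fun j => ‖∑ u ∈ Finset.range (qseq m j),
    e (γ * Sα b u + β * u)‖ with hgdef
  set Q : ℕ → ℝ := fun j => (qseq m j : ℝ) with hQdef
  have hgeq : ∀ n, g n = ‖∑ u ∈ Finset.range (qseq m n),
    e (γ * Sα b u + β * u)‖ := fun _ => rfl
  have hQeq : ∀ n, Q n = (qseq m n : ℝ) := fun _ => rfl
  have hQpos : ∀ j, 0 < Q j := by
    intro j; rw [hQeq]; exact_mod_cast qseq_pos m hm1 j
  have hgnonneg : ∀ j, 0 ≤ g j := fun j => norm_nonneg _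
  have hgle : ∀ j, g j ≤ Q j := by
    intro j
    rw [hgeq, hQeq]
    calc ‖∑ u ∈ Finset.range (qseq m j), e (γ * Sα b u + β * u)‖
        ≤ ∑ u ∈ Finset.range (qseq m j), ‖e (γ * Sα b u + β * u)‖ :=
          norm_sum_le _ _
    _ = (qseq m j : ℝ) := by simp [abs_e]
  set D : ℕ → ℝ := fun j => max (g (j+1) / Q (j+1)) (g j / Q j) with hDdef
  have hDeq : ∀ n, D n = max (g (n+1) / Q (n+1)) (g n / Q n) := fun _ => rfl
  have hDnonneg : ∀ j, 0 ≤ D j := by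
    intro j
    rw [hDeq]
    exact le_trans (div_nonneg (hgnonneg j) (hQpos j).le) (le_max_right _ _)
  have hD0 : D 0 ≤ 1 := by
    rw [hDeq]
    apply max_le <;> rw [div_le_one (hQpos _)] <;> exact hgle _
  have hcomp1 : ∀ j, g (j+1) ≤ Q (j+1) * D j := by
    intro j
    have h := le_max_left (g (j+1) / Q (j+1)) (g j / Q j)
    rw [← hDeq, div_le_iff₀ (hQpos (j+1))] at h
    linarith
  have hcomp0 : ∀ j, g j ≤ Q j * D j := by
    intro j
    have h := le_max_right (g (j+1) / Q (j+1)) (g j / Q j)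
    rw [← hDeq, div_le_iff₀ (hQpos j)] at h
    linarith
  have hQrec : ∀ j, Q (j+2) = (mx m (j+1) : ℝ) * Q (j+1) + Q j := by
    intro j
    have h := qseq_rec m (j+1) (by omega)
    simp only [show j+1+1 = j+2 by omega, show j+1-1 = j by omega] at h
    rw [hQeq, hQeq, hQeq]
    exact_mod_cast h
  have hQmono : ∀ j, Q j ≤ Q (j+1) := by
    intro j; rw [hQeq, hQeq]; exact_mod_cast qseq_mono m hm1 (Nat.le_succ j)
  have habs_coef : ∀ (a : ℕ) (θ : ℝ),
      ‖∑ c ∈ Finset.range a, e ((c:ℝ) * θ)‖ ≤ (a : ℝ) := by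
    intro a θ
    calc ‖∑ c ∈ Finset.range a, e ((c:ℝ) * θ)‖
        ≤ ∑ c ∈ Finset.range a, ‖e ((c:ℝ) * θ)‖ := norm_sum_le _ _
    _ = (a : ℝ) := by simp [abs_e]
  have hgrec : ∀ j, g (j+2) ≤ (mx m (j+1) : ℝ) * g (j+1) + g j := by
    intro j
    have hrec := G_rec hm1 hb γ β (k := j+1) (by omega)
    simp only [show j+1+1 = j+2 by omega, show j+1-1 = j by omega] at hrec
    rw [hgeq (j+2), hrec]
    calc ‖_‖
        ≤ ‖(∑ c ∈ Finset.range (mx m (j+1)),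
            e ((c:ℝ) * (γ + β * qseq m (j+1)))) *
            (∑ u ∈ Finset.range (qseq m (j+1)), e (γ * Sα b u + β * u))‖
          + ‖e ((mx m (j+1) : ℝ) * (γ + β * qseq m (j+1))) *
            (∑ u ∈ Finset.range (qseq m j), e (γ * Sα b u + β * u))‖ := norm_add_le _ _
    _ ≤ (mx m (j+1) : ℝ) * g (j+1) + g j := by
        rw [norm_mul, norm_mul, abs_e, one_mul, ← hgeq, ← hgeq]
        have h1 := habs_coef (mx m (j+1)) (γ + β * qseq m (j+1))
        exact add_le_add (mul_le_mul_of_nonneg_right h1 (hgnonneg (j+1))) (le_refl _)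
  have hgodd : ∀ j, (j+1) % 2 = 1 →
      g (j+2) ≤ ((m:ℝ) - 4 * intDist (γ + β * Q (j+1)) ^ 2) * g (j+1) + g j := by
    intro j hodd
    have hrec := G_rec hm1 hb γ β (k := j+1) (by omega)
    simp only [show j+1+1 = j+2 by omega, show j+1-1 = j by omega] at hrec
    have hmx : mx m (j+1) = m := by unfold mx; rw [if_neg (by omega)]
    rw [hmx] at hrec
    rw [hgeq (j+2), hrec]
    calc ‖_‖
        ≤ ‖(∑ c ∈ Finset.range m,
            e ((c:ℝ) * (γ + β * qseq m (j+1)))) *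
            (∑ u ∈ Finset.range (qseq m (j+1)), e (γ * Sα b u + β * u))‖
          + ‖e ((m : ℝ) * (γ + β * qseq m (j+1))) *
            (∑ u ∈ Finset.range (qseq m j), e (γ * Sα b u + β * u))‖ := norm_add_le _ _
    _ ≤ ((m:ℝ) - 4 * intDist (γ + β * Q (j+1)) ^ 2) * g (j+1) + g j := by
        rw [norm_mul, norm_mul, abs_e, one_mul, ← hgeq, ← hgeq]
        have h1 := abs_geom_sum_le hm (γ + β * (qseq m (j+1) : ℝ))
        have h2 : ‖∑ c ∈ Finset.range m, e ((c:ℝ) * (γ + β * (qseq m (j+1):ℝ)))‖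
            ≤ (m:ℝ) - 4 * intDist (γ + β * Q (j+1)) ^ 2 := by
          rw [hQeq]; exact h1
        exact add_le_add (mul_le_mul_of_nonneg_right h2 (hgnonneg (j+1))) (le_refl _)
  have hmono : ∀ j, D (j+1) ≤ D j := by
    intro j
    rw [hDeq (j+1)]
    simp only [show j+1+1 = j+2 by omega]
    apply max_le
    · rw [div_le_iff₀ (hQpos (j+2))]
      have h1 := hgrec j
      have h2 := hcomp1 j
      have h3 := hcomp0 j
      have h4 : Q (j+2) * D j = ((mx m (j+1) : ℝ) * Q (j+1) + Q j) * D j := by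
        rw [hQrec j]
      have hmxnn : (0:ℝ) ≤ (mx m (j+1) : ℝ) := Nat.cast_nonneg _
      have h5 : (mx m (j+1) : ℝ) * g (j+1) ≤ (mx m (j+1) : ℝ) * (Q (j+1) * D j) :=
        mul_le_mul_of_nonneg_left h2 hmxnn
      linarith [h1, h3, h4, h5]
    · rw [div_le_iff₀ (hQpos (j+1))]
      calc g (j+1) ≤ Q (j+1) * D j := hcomp1 j
      _ = D j * Q (j+1) := by ring
  have hanti : ∀ a c : ℕ, a ≤ c → D c ≤ D a := by
    intro a c h
    induction c with
    | zero =>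
      have : a = 0 := by omega
      rw [this]
    | succ n ih =>
      rcases Nat.lt_or_ge a (n+1) with h2 | h2
      · exact le_trans (hmono n) (ih (by omega))
      · have : a = n+1 := by omega
        rw [this]
  have hgood : ∀ i, (i+1) % 2 = 1 → δ ≤ intDist (γ + β * Q (i+1)) → D (i+2) ≤ ρ * D i := by
    intro i hodd hgd
    set d := intDist (γ + β * Q (i+1)) with hd
    have hdhalf : d ≤ 1/2 := intDist_le_half _
    have hdnn : 0 ≤ d := intDist_nonneg _
    have h1 : g (i+2) ≤ ((m:ℝ) - ε) * g (i+1) + g i := by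
      have h0 := hgodd i hodd
      have hsq : δ * δ ≤ d * d := mul_self_le_mul_self hδpos.le hgd
      have hcle : (m:ℝ) - 4 * d^2 ≤ (m:ℝ) - ε := by rw [hεdef]; nlinarith [hsq]
      have hmul := mul_le_mul_of_nonneg_right hcle (hgnonneg (i+1))
      linarith [h0, hmul]
    have hmx2 : mx m (i+2) = 1 := by unfold mx; rw [if_pos (by omega)]
    have h2 : g (i+3) ≤ g (i+2) + g (i+1) := by
      have h := hgrec (i+1)
      simp only [show i+1+2 = i+3 by omega, show i+1+1 = i+2 by omega, hmx2] at h
      push_cast at h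
      linarith
    have hQr1 : Q (i+2) = (m:ℝ) * Q (i+1) + Q i := by
      have h := hQrec i
      have hmx1 : mx m (i+1) = m := by unfold mx; rw [if_neg (by omega)]
      rw [hmx1] at h
      exact h
    have hQr2 : Q (i+3) = Q (i+2) + Q (i+1) := by
      have h := hQrec (i+1)
      simp only [show i+1+2 = i+3 by omega, show i+1+1 = i+2 by omega, hmx2] at h
      push_cast at h
      linarith
    have hA : g (i+2) ≤ (Q (i+2) - ε * Q (i+1)) * D i := by
      have c1 := hcomp1 i
      have c0 := hcomp0 i
      have hcoef : (0:ℝ) ≤ (m:ℝ) - ε := by linarith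
      calc g (i+2) ≤ ((m:ℝ) - ε) * g (i+1) + g i := h1
      _ ≤ ((m:ℝ) - ε) * (Q (i+1) * D i) + Q i * D i :=
          add_le_add (mul_le_mul_of_nonneg_left c1 hcoef) c0
      _ = (Q (i+2) - ε * Q (i+1)) * D i := by rw [hQr1]; ring
    have hB : g (i+3) ≤ (Q (i+2) + (1 - ε) * Q (i+1)) * D i := by
      calc g (i+3) ≤ g (i+2) + g (i+1) := h2
      _ ≤ (Q (i+2) - ε * Q (i+1)) * D i + Q (i+1) * D i := add_le_add hA (hcomp1 i)
      _ = (Q (i+2) + (1 - ε) * Q (i+1)) * D i := by ring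
    have hQle : Q (i+2) ≤ ((m:ℝ)+1) * Q (i+1) := by
      rw [hQr1]
      have := hQmono i
      linarith
    have hQ1 := hQpos (i+1)
    have hQ2 := hQpos (i+2)
    have ha : ε * Q (i+2) ≤ ε * (((m:ℝ)+1) * Q (i+1)) :=
      mul_le_mul_of_nonneg_left hQle hεpos.le
    have hbb : (0:ℝ) ≤ ε * Q (i+1) * ((m:ℝ)+1) := by positivity
    have hcc : (0:ℝ) ≤ ε * Q (i+1) * (m:ℝ) := by positivity
    have h1' : ε * Q (i+2) ≤ (ε * Q (i+1)) * K := by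
      rw [hKdef]; linarith [ha, hbb]
    have h2' : ε * (Q (i+2) + Q (i+1)) ≤ (ε * Q (i+1)) * K := by
      rw [hKdef]; linarith [ha, hcc]
    have hfac1 : Q (i+2) - ε * Q (i+1) ≤ ρ * Q (i+2) := by
      rw [hρdef]
      have expand : (1 - ε/K) * Q (i+2) = Q (i+2) - (ε * Q (i+2))/K := by
        field_simp
      rw [expand]
      have := (div_le_iff₀ hKpos).mpr h1'
      linarith
    have hfac2 : Q (i+2) + (1-ε) * Q (i+1) ≤ ρ * Q (i+3) := by
      rw [hρdef, hQr2]
      have expand : (1 - ε/K) * (Q (i+2) + Q (i+1))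
          = (Q (i+2) + Q (i+1)) - (ε * (Q (i+2) + Q (i+1)))/K := by
        field_simp
      rw [expand]
      have := (div_le_iff₀ hKpos).mpr h2'
      linarith
    rw [hDeq (i+2)]
    simp only [show i+2+1 = i+3 by omega]
    apply max_le
    · rw [div_le_iff₀ (hQpos (i+3))]
      calc g (i+3) ≤ (Q (i+2) + (1 - ε) * Q (i+1)) * D i := hB
      _ ≤ (ρ * Q (i+3)) * D i := mul_le_mul_of_nonneg_right hfac2 (hDnonneg i)
      _ = ρ * D i * Q (i+3) := by ring
    · rw [div_le_iff₀ (hQpos (i+2))]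
      calc g (i+2) ≤ (Q (i+2) - ε * Q (i+1)) * D i := hA
      _ ≤ (ρ * Q (i+2)) * D i := mul_le_mul_of_nonneg_right hfac1 (hDnonneg i)
      _ = ρ * D i * Q (i+2) := by ring
  have hwindow : ∀ i, i % 2 = 0 →
      δ ≤ intDist (γ + β * Q (i+1)) ∨ δ ≤ intDist (γ + β * Q (i+3)) ∨
      δ ≤ intDist (γ + β * Q (i+5)) := by
    intro i hev
    by_contra hcon
    push_neg at hcon
    obtain ⟨hc1, hc3, hc5⟩ := hcon
    have hqw := qseq_window m (i+1) (by omega)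
    simp only [show i+1+4 = i+5 by omega, show i+1+2 = i+3 by omega] at hqw
    have hqwR : Q (i+5) + Q (i+1) = ((m:ℝ)+2) * Q (i+3) := by
      rw [hQeq, hQeq, hQeq]
      exact_mod_cast hqw
    have hiden : (m:ℝ) * γ = ((m:ℝ)+2) * (γ + β * Q (i+3)) - (γ + β * Q (i+1))
        - (γ + β * Q (i+5)) := by
      linear_combination β * hqwR
    have hb1 : intDist (((m:ℝ)+2) * (γ + β * Q (i+3)))
        ≤ ((m:ℝ)+2) * intDist (γ + β * Q (i+3)) := by
      have h := intDist_nsmul_le (m+2) (γ + β * Q (i+3))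
      push_cast at h
      exact h
    have hchain : intDist ((m:ℝ)*γ) ≤ ((m:ℝ)+2) * intDist (γ + β * Q (i+3))
        + intDist (γ + β * Q (i+1)) + intDist (γ + β * Q (i+5)) := by
      rw [hiden]
      calc intDist (((m:ℝ)+2) * (γ + β * Q (i+3)) - (γ + β * Q (i+1)) - (γ + β * Q (i+5)))
          ≤ intDist (((m:ℝ)+2) * (γ + β * Q (i+3)) - (γ + β * Q (i+1)))
            + intDist (γ + β * Q (i+5)) := intDist_sub_le _ _
      _ ≤ intDist (((m:ℝ)+2) * (γ + β * Q (i+3))) + intDist (γ + β * Q (i+1))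
            + intDist (γ + β * Q (i+5)) := by
          have := intDist_sub_le (((m:ℝ)+2) * (γ + β * Q (i+3))) (γ + β * Q (i+1))
          linarith
      _ ≤ _ := by linarith
    have h3n := intDist_nonneg (γ + β * Q (i+3))
    have hfin : intDist ((m:ℝ)*γ) < ((m:ℝ)+4) * δ := by
      have hmul := mul_lt_mul_of_pos_left hc3 (show (0:ℝ) < (m:ℝ)+2 by linarith)
      linarith [hchain, hc1, hc5, hmul]
    have heq4 : ((m:ℝ)+4) * δ = intDist ((m:ℝ)*γ) := by
      rw [hδdef, mul_comm]
      exact div_mul_cancel₀ _ (by positivity)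
    rw [heq4] at hfin
    exact lt_irrefl _ hfin
  have hstep : ∀ i, i % 2 = 0 → D (i+6) ≤ ρ * D i := by
    intro i hev
    rcases hwindow i hev with h | h | h
    · exact le_trans (hanti _ _ (by omega)) (hgood i (by omega) h)
    · have h13 : δ ≤ intDist (γ + β * Q (i+2+1)) := by
        rw [show i+2+1 = i+3 by omega]; exact h
      have hgd := hgood (i+2) (by omega) h13
      rw [show i+2+2 = i+4 by omega] at hgd
      calc D (i+6) ≤ D (i+4) := hanti _ _ (by omega)
      _ ≤ ρ * D (i+2) := hgd
      _ ≤ ρ * D i := mul_le_mul_of_nonneg_left (hanti _ _ (by omega)) hρpos.le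
    · have h15 : δ ≤ intDist (γ + β * Q (i+4+1)) := by
        rw [show i+4+1 = i+5 by omega]; exact h
      have hgd := hgood (i+4) (by omega) h15
      rw [show i+4+2 = i+6 by omega] at hgd
      exact le_trans hgd (mul_le_mul_of_nonneg_left (hanti _ _ (by omega)) hρpos.le)
  have hiter : ∀ t, D (6*t) ≤ ρ ^ t := by
    intro t
    induction t with
    | zero => simpa using hD0
    | succ n ih =>
      have h6 : 6 * (n+1) = 6*n + 6 := by ring
      rw [h6, pow_succ]
      calc D (6*n + 6) ≤ ρ * D (6*n) := hstep (6*n) (by omega)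
      _ ≤ ρ * ρ^n := mul_le_mul_of_nonneg_left ih hρpos.le
      _ = ρ^n * ρ := by ring
  obtain ⟨j, rfl⟩ : ∃ j, k = j + 1 := ⟨k - 1, by omega⟩
  have hLHS : ‖(1 / (qseq m (j+1) : ℂ)) *
      ∑ u ∈ Finset.range (qseq m (j+1)), e (γ * Sα b u + β * u)‖ = g (j+1) / Q (j+1) := by
    rw [norm_mul, norm_div, norm_one, Complex.norm_natCast, ← hgeq, ← hQeq]
    rw [one_div, inv_mul_eq_div]
  rw [hLHS]
  set t : ℕ := j / 6 with htdef
  have hchain1 : g (j+1) / Q (j+1) ≤ D j := by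
    rw [hDeq]
    exact le_max_left _ _
  have hchain2 : D j ≤ ρ ^ t := le_trans (hanti (6*t) j (by omega)) (hiter t)
  have hρt : ρ ^ t = Real.exp (t * Real.log ρ) := by
    rw [Real.exp_nat_mul, Real.exp_log hρpos]
  have htge : ((j+1 : ℕ) : ℝ) / 6 - 1 ≤ (t : ℝ) := by
    have h6 : j + 1 ≤ 6 * t + 6 := by omega
    have : ((j+1:ℕ):ℝ) ≤ 6 * (t:ℝ) + 6 := by exact_mod_cast h6
    linarith
  have hexp : ρ ^ t ≤ Real.exp (-Real.log ρ) *
      Real.exp (-(((j+1:ℕ):ℝ) * (-Real.log ρ / 6))) := by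
    rw [hρt, ← Real.exp_add]
    apply Real.exp_le_exp.mpr
    have hmul : (t : ℝ) * Real.log ρ ≤ (((j+1:ℕ):ℝ)/6 - 1) * Real.log ρ :=
      mul_le_mul_of_nonpos_right htge hlogneg.le
    calc (t:ℝ) * Real.log ρ ≤ (((j+1:ℕ):ℝ)/6 - 1) * Real.log ρ := hmul
    _ = -Real.log ρ + -(((j+1:ℕ):ℝ) * (-Real.log ρ / 6)) := by ring
  calc g (j+1) / Q (j+1) ≤ ρ ^ t := le_trans hchain1 hchain2
  _ ≤ _ := hexp

end
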